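/- For every directed acyclic graph G, the treewidth of the underlying undirected graph of G is at most the node scanwidth of G: tw(G) ≤ nsw(G). Concretely, given a tree extension T of G of node width k+1, the tree T with bags A_v ∪ {v} (where A_v is the set of proper ancestors of v in T having an out-neighbour in G among the descendants of v in T) is a tree decomposition of the underlying undirected graph of G of width at most k. -/

import Mathlib

/-- A rooted tree on the vertex set `V`, given by its root and parent function
(the parent of the root is the root itself, and every vertex reaches the root by
iterating the parent function). -/
structure RTree (V : Type*) where
  root : V
  parent : V → V
  parent_root : parent root = root
  reach : ∀ v, ∃ n, parent^[n] v = root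

namespace RTree

variable {V : Type*}

/-- `u` is an ancestor of `v` (possibly `u = v`). -/
def anc (T : RTree V) (u v : V) : Prop := ∃ n, T.parent^[n] v = u

/-- `u` is a proper ancestor of `v`. -/
def panc (T : RTree V) (u v : V) : Prop := T.anc u v ∧ u ≠ v

/-- The set of descendants of `v` in `T`, including `v` itself. -/
def Z (T : RTree V) (v : V) : Set V := {w | T.anc v w}

end RTree

/-- The set of in-neighbours (prey) of `w` in the directed graph `F`. -/
def inN {V : Type*} (F : V → V → Prop) (w : V) : Set V := {u | F u w}

/-- `F` is a DAG. -/
def Acyclic {V : Type*} (F : V → V → Prop) : Prop := ∀ v, ¬ Relation.TransGen F v v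

/-- `T` is a tree extension of the DAG `F`: for every arc `(u,v)` of `F`, `u` is a
proper ancestor of `v` in `T`. -/
def IsTreeExt {V : Type*} (F : V → V → Prop) (T : RTree V) : Prop :=
  ∀ u v, F u v → T.panc u v

/-- `A_v`: the set of proper ancestors of `v` in `T` that have an out-neighbour in `F`
among the descendants of `v` in `T`. -/
def Aset {V : Type*} (F : V → V → Prop) (T : RTree V) (v : V) : Set V :=
  {a | T.panc a v ∧ ∃ w, F a w ∧ w ∈ T.Z v}

/-- `(T, bags)` is a tree decomposition of the undirected graph `H`. -/
def IsTreeDecomp {V : Type*} {ι : Type*} (H : SimpleGraph V) (T : SimpleGraph ι)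
    (bags : ι → Set V) : Prop :=
  T.IsTree ∧
  (∀ u v : V, H.Adj u v → ∃ t, u ∈ bags t ∧ v ∈ bags t) ∧
  (∀ v : V, (T.induce {t | v ∈ bags t}).Connected)

/-- `H` has a tree decomposition of width at most `w`. -/
def HasTDWidth {V : Type*} (H : SimpleGraph V) (w : ℕ) : Prop :=
  ∃ (ι : Type) (T : SimpleGraph ι) (bags : ι → Set V),
    IsTreeDecomp H T bags ∧ ∀ t, (bags t).ncard ≤ w + 1

/-- The treewidth of `H`. -/
noncomputable def treewidth {V : Type*} (H : SimpleGraph V) : ℕ :=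
  sInf {w | HasTDWidth H w}

/-- The underlying undirected graph of the directed graph `F`. -/
def und {V : Type*} (F : V → V → Prop) : SimpleGraph V := SimpleGraph.fromRel F

/-- The undirected graph of the rooted tree `T` (edges between children and parents). -/
def treeGraph {V : Type*} (T : RTree V) : SimpleGraph V :=
  SimpleGraph.fromRel (fun a b => T.parent b = a ∧ b ≠ T.root)

/-- The node scanwidth of `F`, where the node width of `v` is `|A_v| + 1`. -/
noncomputable def nsw {V : Type*} (F : V → V → Prop) : ℕ :=
  sInf {k | ∃ T : RTree V, IsTreeExt F T ∧ ∀ v, (Aset F T v).ncard + 1 ≤ k}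

section Helpers

variable {V : Type*}

namespace RTree

lemma root_iterate (T : RTree V) (n : ℕ) : T.parent^[n] T.root = T.root :=
  Function.iterate_fixed T.parent_root n

lemma parent_eq_self_iff (T : RTree V) {v : V} : T.parent v = v ↔ v = T.root := by
  constructor
  · intro h
    obtain ⟨n, hn⟩ := T.reach v
    rw [Function.iterate_fixed h n] at hn
    exact hn
  · rintro rfl; exact T.parent_root

lemma anc_refl (T : RTree V) (v : V) : T.anc v v := ⟨0, rfl⟩

lemma eq_root_of_anc_root (T : RTree V) {u : V} (h : T.anc u T.root) : u = T.root := by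
  obtain ⟨n, hn⟩ := h
  rw [T.root_iterate n] at hn
  exact hn.symm

lemma eq_root_of_periodic (T : RTree V) {v : V} {p : ℕ} (hp : p ≠ 0)
    (h : T.parent^[p] v = v) : v = T.root := by
  have hmul : ∀ j, T.parent^[j * p] v = v := by
    intro j
    induction j with
    | zero => simp
    | succ j ih =>
      have hps : (j + 1) * p = p + j * p := by ring
      rw [hps, Function.iterate_add_apply, ih, h]
  obtain ⟨k, hk⟩ := T.reach v
  have hkp : k ≤ k * p := Nat.le_mul_of_pos_right k (Nat.pos_of_ne_zero hp)
  have hroot : T.parent^[k * p] v = T.root := by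
    have hsum : k * p - k + k = k * p := Nat.sub_add_cancel hkp
    rw [← hsum, Function.iterate_add_apply, hk, T.root_iterate]
  rw [hmul k] at hroot
  exact hroot

lemma anc_antisymm (T : RTree V) {a b : V} : T.anc a b → T.anc b a → a = b := by
  rintro ⟨n, hn⟩ ⟨m, hm⟩
  rcases Nat.eq_zero_or_pos (n + m) with h0 | hpos
  · have hn0 : n = 0 := by omega
    subst hn0
    exact hn.symm
  · have hper : T.parent^[n + m] a = a := by
      rw [Function.iterate_add_apply, hm, hn]
    have ha : a = T.root := T.eq_root_of_periodic (by omega) hper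
    subst ha
    rw [T.root_iterate] at hm
    exact hm

lemma anc_parent_of_ne (T : RTree V) {u v : V} (h : T.anc u v) (hne : u ≠ v) :
    T.anc u (T.parent v) := by
  obtain ⟨n, hn⟩ := h
  cases n with
  | zero => exact absurd hn.symm hne
  | succ m => exact ⟨m, by rw [← Function.iterate_succ_apply]; exact hn⟩

lemma parent_anc (T : RTree V) {v w : V} (h : T.anc v w) : T.anc (T.parent v) w := by
  obtain ⟨m, hm⟩ := h
  exact ⟨m + 1, by rw [Function.iterate_succ_apply', hm]⟩

lemma anc_of_anc_parent (T : RTree V) {t c : V} (h : T.anc t (T.parent c)) : T.anc t c := by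
  obtain ⟨m, hm⟩ := h
  exact ⟨m + 1, by rw [Function.iterate_succ_apply]; exact hm⟩

lemma adj_parent (T : RTree V) {v : V} (hv : v ≠ T.root) :
    (treeGraph T).Adj v (T.parent v) := by
  rw [treeGraph, SimpleGraph.fromRel_adj]
  exact ⟨fun h => hv (T.parent_eq_self_iff.mp h.symm), Or.inr ⟨rfl, hv⟩⟩

lemma reach_root_reachable (T : RTree V) :
    ∀ (n : ℕ) (v : V), T.parent^[n] v = T.root → (treeGraph T).Reachable v T.root := by
  intro n
  induction n with
  | zero => intro v hv; exact hv ▸ SimpleGraph.Reachable.refl v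
  | succ n ih =>
    intro v hv
    by_cases h : v = T.root
    · exact h ▸ SimpleGraph.Reachable.refl _
    · rw [Function.iterate_succ_apply] at hv
      exact ((T.adj_parent h).reachable).trans (ih (T.parent v) hv)

lemma treeGraph_connected (T : RTree V) : (treeGraph T).Connected := by
  rw [SimpleGraph.connected_iff]
  refine ⟨fun a b => ?_, ⟨T.root⟩⟩
  obtain ⟨na, ha⟩ := T.reach a
  obtain ⟨nb, hb⟩ := T.reach b
  exact (T.reach_root_reachable na a ha).trans (T.reach_root_reachable nb b hb).symm

lemma treeGraph_bridge (T : RTree V) {t : V} (ht : t ≠ T.root) :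
    (treeGraph T).IsBridge s(t, T.parent t) := by
  rw [SimpleGraph.isBridge_iff]
  rintro ⟨p⟩
  have inv : ∀ (a b : V)
      (_ : ((treeGraph T) \ SimpleGraph.fromEdgeSet {s(t, T.parent t)}).Walk a b),
      T.anc t a → T.anc t b := by
    intro a b q
    induction q with
    | nil => exact id
    | @cons a c b hadj q ih =>
      intro ha
      apply ih
      rw [SimpleGraph.sdiff_adj] at hadj
      obtain ⟨hadj1, hadj2⟩ := hadj
      rw [treeGraph, SimpleGraph.fromRel_adj] at hadj1
      obtain ⟨hne, hrel⟩ := hadj1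
      rcases hrel with ⟨hpc, _⟩ | ⟨hpa, _⟩
      · exact T.anc_of_anc_parent (hpc ▸ ha)
      · have hat : a ≠ t := by
          rintro rfl
          apply hadj2
          rw [SimpleGraph.fromEdgeSet_adj]
          exact ⟨by rw [hpa]; rfl, hne⟩
        exact hpa ▸ T.anc_parent_of_ne ha (Ne.symm hat)
  have h1 : T.anc t (T.parent t) := inv t (T.parent t) p (T.anc_refl t)
  have h2 : T.anc (T.parent t) t := ⟨1, by simp⟩
  have h3 : t = T.parent t := T.anc_antisymm h1 h2
  exact ht (T.parent_eq_self_iff.mp h3.symm)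

lemma treeGraph_isTree (T : RTree V) : (treeGraph T).IsTree := by
  refine ⟨T.treeGraph_connected, ?_⟩
  rw [SimpleGraph.isAcyclic_iff_forall_adj_isBridge]
  intro x y hxy
  rw [treeGraph, SimpleGraph.fromRel_adj] at hxy
  obtain ⟨hne, hrel⟩ := hxy
  rcases hrel with ⟨hp, hr⟩ | ⟨hp, hr⟩
  · rw [Sym2.eq_swap, ← hp]
    exact T.treeGraph_bridge hr
  · rw [← hp]
    exact T.treeGraph_bridge hr

end RTree

lemma exists_rtree_of_rho {V : Type} [Fintype V] [Nonempty V] (ρ : V → ℕ)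
    (hinj : Function.Injective ρ) :
    ∃ T : RTree V, ∀ u v : V, ρ u < ρ v → T.panc u v := by
  classical
  obtain ⟨r, -, hr⟩ :=
    Finset.exists_min_image Finset.univ ρ ⟨Classical.arbitrary V, Finset.mem_univ _⟩
  have hr' : ∀ u, ρ r ≤ ρ u := fun u => hr u (Finset.mem_univ u)
  set P : V → V := fun v =>
    if h : (Finset.univ.filter (fun u => ρ u < ρ v)).Nonempty then
      (Finset.exists_max_image _ ρ h).choose
    else v with hP
  have hPspec : ∀ v, v ≠ r → ρ (P v) < ρ v ∧ ∀ u, ρ u < ρ v → ρ u ≤ ρ (P v) := by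
    intro v hv
    have hne : (Finset.univ.filter (fun u => ρ u < ρ v)).Nonempty := by
      refine ⟨r, Finset.mem_filter.mpr ⟨Finset.mem_univ r, ?_⟩⟩
      exact lt_of_le_of_ne (hr' v) (fun h => hv (hinj h).symm)
    obtain ⟨hb, hmax⟩ := (Finset.exists_max_image
      (Finset.univ.filter (fun u => ρ u < ρ v)) ρ hne).choose_spec
    have hPv : P v = (Finset.exists_max_image
        (Finset.univ.filter (fun u => ρ u < ρ v)) ρ hne).choose := by
      rw [hP]; exact dif_pos hne
    constructor
    · rw [hPv]; exact (Finset.mem_filter.mp hb).2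
    · intro u hu
      rw [hPv]
      exact hmax u (Finset.mem_filter.mpr ⟨Finset.mem_univ u, hu⟩)
  have hPr : P r = r := by
    rw [hP]
    apply dif_neg
    rintro ⟨u, hu⟩
    exact absurd (Finset.mem_filter.mp hu).2 (not_lt.mpr (hr' u))
  have reach_aux : ∀ (N : ℕ) (v : V), ρ v ≤ N → ∃ n, P^[n] v = r := by
    intro N
    induction N with
    | zero =>
      intro v hv
      by_cases h : v = r
      · exact ⟨0, h⟩
      · have := (hPspec v h).1; omega
    | succ N ih =>
      intro v hv
      by_cases h : v = r
      · exact ⟨0, h⟩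
      · obtain ⟨hlt, -⟩ := hPspec v h
        obtain ⟨n, hn⟩ := ih (P v) (by omega)
        exact ⟨n + 1, by rw [Function.iterate_succ_apply]; exact hn⟩
  have anc_aux : ∀ (N : ℕ) (v u : V), ρ v ≤ N → ρ u < ρ v → ∃ n, P^[n] v = u := by
    intro N
    induction N with
    | zero => intro v u hv hu; omega
    | succ N ih =>
      intro v u hv hu
      have h : v ≠ r := by
        rintro rfl
        exact absurd hu (not_lt.mpr (hr' u))
      obtain ⟨hlt, hmax⟩ := hPspec v h
      have hle := hmax u hu
      rcases eq_or_lt_of_le hle with heq | hlt2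
      · exact ⟨1, by simpa using (hinj heq).symm⟩
      · obtain ⟨n, hn⟩ := ih (P v) u (by omega) hlt2
        exact ⟨n + 1, by rw [Function.iterate_succ_apply]; exact hn⟩
  refine ⟨⟨r, P, hPr, fun v => reach_aux (ρ v) v le_rfl⟩, fun u v huv => ?_⟩
  exact ⟨anc_aux (ρ v) v u le_rfl huv, fun h => by subst h; exact absurd huv (lt_irrefl _)⟩

lemma exists_treeExt {V : Type} [Fintype V] [Nonempty V] (F : V → V → Prop)
    (hacyc : Acyclic F) : ∃ T : RTree V, IsTreeExt F T := by
  classical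
  set n := Fintype.card V with hn'
  have hn : 0 < n := Fintype.card_pos
  set g := Fintype.equivFin V with hg
  set rk : V → ℕ := fun v => (Finset.univ.filter (fun u => Relation.TransGen F u v)).card
    with hrk
  have hrklt : ∀ a b, Relation.TransGen F a b → rk a < rk b := by
    intro a b hab
    apply Finset.card_lt_card
    constructor
    · intro u hu
      rw [Finset.mem_filter] at hu ⊢
      exact ⟨Finset.mem_univ u, hu.2.trans hab⟩
    · intro hsub
      have ha : a ∈ Finset.univ.filter (fun u => Relation.TransGen F u b) :=
        Finset.mem_filter.mpr ⟨Finset.mem_univ a, hab⟩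
      exact hacyc a (Finset.mem_filter.mp (hsub ha)).2
  set ρ : V → ℕ := fun v => n * rk v + (g v).val with hρ
  have hmono : ∀ a b : V, rk a < rk b → ρ a < ρ b := by
    intro a b h1
    have h2 : ((g a) : ℕ) < n := (g a).isLt
    calc n * rk a + ((g a) : ℕ) < n * rk a + n := by omega
      _ = n * (rk a + 1) := by ring
      _ ≤ n * rk b := Nat.mul_le_mul_left n h1
      _ ≤ n * rk b + ((g b) : ℕ) := Nat.le_add_right _ _
  have hρinj : Function.Injective ρ := by
    intro a b hab
    rcases lt_trichotomy (rk a) (rk b) with h | h | h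
    · exact absurd hab (Nat.ne_of_lt (hmono a b h))
    · have hab' : n * rk a + ((g a) : ℕ) = n * rk b + ((g b) : ℕ) := hab
      rw [h] at hab'
      have : ((g a) : ℕ) = ((g b) : ℕ) := by omega
      exact g.injective (Fin.ext this)
    · exact absurd hab.symm (Nat.ne_of_lt (hmono b a h))
  obtain ⟨T, hT⟩ := exists_rtree_of_rho ρ hρinj
  exact ⟨T, fun u v huv => hT u v (hmono u v (hrklt u v (Relation.TransGen.single huv)))⟩

end Helpers

/-- For every DAG `F`, the treewidth of the underlying undirected graph of
`F` is at most the node scanwidth of `F`.  Concretely, given a tree extension `T` of `F`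
of node width at most `k+1`, the tree `T` with bags `A_v ∪ {v}` is a tree decomposition
of the underlying undirected graph of `F` of width at most `k`. -/
theorem stmt_11 {V : Type} [Fintype V] (F : V → V → Prop) (hacyc : Acyclic F) :
    treewidth (und F) ≤ nsw F ∧
    ∀ (T : RTree V) (k : ℕ), IsTreeExt F T →
      (∀ v, (Aset F T v).ncard + 1 ≤ k + 1) →
      IsTreeDecomp (und F) (treeGraph T) (fun v => Aset F T v ∪ {v}) ∧
        ∀ v, (Aset F T v ∪ {v}).ncard ≤ k + 1 := by
  classical
  have part2 : ∀ (T : RTree V) (k : ℕ), IsTreeExt F T →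
      (∀ v, (Aset F T v).ncard + 1 ≤ k + 1) →
      IsTreeDecomp (und F) (treeGraph T) (fun v => Aset F T v ∪ {v}) ∧
        ∀ v, (Aset F T v ∪ {v}).ncard ≤ k + 1 := by
    intro T k hTE hk
    have hsize : ∀ v, (Aset F T v ∪ {v}).ncard ≤ k + 1 := by
      intro v
      have hv : v ∉ Aset F T v := fun h => h.1.2 rfl
      rw [Set.union_singleton, Set.ncard_insert_of_notMem hv]
      exact hk v
    refine ⟨⟨RTree.treeGraph_isTree T, ?_, ?_⟩, hsize⟩
    · intro u v huv
      rw [und, SimpleGraph.fromRel_adj] at huv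
      obtain ⟨hne, hF | hF⟩ := huv
      · exact ⟨v, Or.inl ⟨hTE u v hF, v, hF, T.anc_refl v⟩, Or.inr rfl⟩
      · exact ⟨u, Or.inr rfl, Or.inl ⟨hTE v u hF, u, hF, T.anc_refl u⟩⟩
    · intro x
      show ((treeGraph T).induce {t | x ∈ Aset F T t ∪ {t}}).Connected
      set S : Set V := {t | x ∈ Aset F T t ∪ {t}} with hS
      have hxS : x ∈ S := Or.inr rfl
      have hAx : ∀ t, t ∈ S → t ≠ x → x ∈ Aset F T t := by
        intro t htS htx
        rcases htS with h | h
        · exact h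
        · exact absurd h.symm htx
      have step : ∀ t : V, t ∈ S → t ≠ x →
          T.parent t ∈ S ∧ (treeGraph T).Adj t (T.parent t) := by
        intro t htS htx
        obtain ⟨⟨hanc, hne⟩, w, hFw, hwZ⟩ := hAx t htS htx
        have htroot : t ≠ T.root := by
          rintro rfl
          exact hne (T.eq_root_of_anc_root hanc)
        refine ⟨?_, T.adj_parent htroot⟩
        by_cases hpx : T.parent t = x
        · rw [hpx]; exact hxS
        · exact Or.inl ⟨⟨T.anc_parent_of_ne hanc hne, fun h => hpx h.symm⟩,
            w, hFw, T.parent_anc hwZ⟩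
      have key : ∀ (n : ℕ) (t : V) (ht : t ∈ S), T.parent^[n] t = x →
          ((treeGraph T).induce S).Reachable ⟨t, ht⟩ ⟨x, hxS⟩ := by
        intro n
        induction n with
        | zero =>
          intro t ht h
          simp only [Function.iterate_zero_apply] at h
          subst h
          exact SimpleGraph.Reachable.refl _
        | succ n ih =>
          intro t ht h
          by_cases htx : t = x
          · subst htx
            exact SimpleGraph.Reachable.refl _
          · obtain ⟨hpS, hadj⟩ := step t ht htx
            have hadj' : ((treeGraph T).induce S).Adj ⟨t, ht⟩ ⟨T.parent t, hpS⟩ := hadj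
            rw [Function.iterate_succ_apply] at h
            exact hadj'.reachable.trans (ih (T.parent t) hpS h)
      rw [SimpleGraph.connected_iff]
      refine ⟨?_, ⟨⟨x, hxS⟩⟩⟩
      have toX : ∀ (t : V) (ht : t ∈ S),
          ((treeGraph T).induce S).Reachable ⟨t, ht⟩ ⟨x, hxS⟩ := by
        intro t ht
        by_cases htx : t = x
        · subst htx; exact SimpleGraph.Reachable.refl _
        · obtain ⟨n, hn⟩ := (hAx t ht htx).1.1
          exact key n t ht hn
      rintro ⟨t₁, h₁⟩ ⟨t₂, h₂⟩
      exact (toX t₁ h₁).trans (toX t₂ h₂).symm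
  refine ⟨?_, part2⟩
  rcases isEmpty_or_nonempty V with h | h
  · have h0 : HasTDWidth (und F) 0 := by
      refine ⟨Unit, ⊥, fun _ => ∅, ⟨⟨?_, SimpleGraph.isAcyclic_bot⟩, ?_, ?_⟩, ?_⟩
      · rw [SimpleGraph.connected_iff]
        exact ⟨fun a b => by rw [Subsingleton.elim a b], ⟨()⟩⟩
      · intro u v _
        exact isEmptyElim u
      · intro v
        exact isEmptyElim v
      · intro t
        simp
    exact le_trans (Nat.sInf_le h0) (Nat.zero_le _)
  · obtain ⟨T₀, hT₀⟩ := exists_treeExt F hacyc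
    have hmem : Fintype.card V ∈
        {k | ∃ T : RTree V, IsTreeExt F T ∧ ∀ v, (Aset F T v).ncard + 1 ≤ k} := by
      refine ⟨T₀, hT₀, fun v => ?_⟩
      have hv : v ∉ Aset F T₀ v := fun h => h.1.2 rfl
      calc (Aset F T₀ v).ncard + 1 = (insert v (Aset F T₀ v)).ncard :=
            (Set.ncard_insert_of_notMem hv (Set.toFinite _)).symm
        _ ≤ (Set.univ : Set V).ncard :=
            Set.ncard_le_ncard (Set.subset_univ _) Set.finite_univ
        _ = Fintype.card V := by rw [Set.ncard_univ, Nat.card_eq_fintype_card]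
    have hmem2 : nsw F ∈
        {k | ∃ T : RTree V, IsTreeExt F T ∧ ∀ v, (Aset F T v).ncard + 1 ≤ k} :=
      Nat.sInf_mem ⟨_, hmem⟩
    obtain ⟨T₁, hTE₁, hbd⟩ := hmem2
    have h1 : 1 ≤ nsw F := le_trans (by omega) (hbd (Classical.arbitrary V))
    obtain ⟨m, hm⟩ : ∃ m, nsw F = m + 1 := ⟨nsw F - 1, by omega⟩
    obtain ⟨hdec, hsz⟩ := part2 T₁ m hTE₁ (by rw [← hm]; exact hbd)
    have htd : HasTDWidth (und F) m := ⟨V, treeGraph T₁, _, hdec, hsz⟩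
    calc treewidth (und F) ≤ m := Nat.sInf_le htd
      _ ≤ nsw F := by omega
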